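/- Let α, β > 0 and (v, θ, ω) ∈ ℝ³ with H₁(v,θ,ω) > 0 and H₂(v,θ,ω) > 0. Set D' = 2ω² + α²v²/β² + 4αθ. Then D' > α²v²/β², and with s₁ = −1, s₂ ∈ {−1,1} satisfying s₂·v = −|v|, t₁ = (2ω − α|v|/β + √D')/(2α), t₂ = |v|/β, and t₃ = (−α|v|/β + √D')/(2α), one has t₁ > 0 and t₃ > 0, and the C2a final state from (v, θ, ω) equals (0, 0, 0). -/

import Mathlib

set_option maxHeartbeats 800000

lemma aux_key (α ω θ r : ℝ) (hα : 0 < α) (hr : 0 ≤ r)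
    (h : 0 < α * r - 2 * ω)
    (hH1 : 2 * α * θ + ω * |ω| > 0)
    (hH2 : ω * |ω| / (2 * α) + θ + ω * r > 0) :
    (α * r - 2 * ω) ^ 2 < 2 * ω ^ 2 + (α * r) ^ 2 + 4 * α * θ := by
  rcases le_or_gt ω 0 with hω | hω
  · rw [abs_of_nonpos hω] at hH2
    have h2 : 2 * α * θ + 2 * α * (ω * r) > ω ^ 2 := by
      have h3 := mul_pos hH2 (by linarith : (0:ℝ) < 2 * α)
      have hne : (2 * α) ≠ 0 := by positivity
      field_simp at h3
      nlinarith [h3]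
    nlinarith
  · rw [abs_of_pos hω] at hH1
    nlinarith [mul_pos hω h]

lemma aux_theta (α θ ω r S : ℝ) (hα : α ≠ 0)
    (hS : S ^ 2 = 2 * ω ^ 2 + (α * r) ^ 2 + 4 * α * θ) :
    θ + ω * ((2 * ω - α * r + S) / (2 * α)) +
      (-1) * α * ((2 * ω - α * r + S) / (2 * α)) ^ 2 / 2 +
      (ω + (-1) * α * ((2 * ω - α * r + S) / (2 * α))) *
        (r + (-(α * r) + S) / (2 * α)) -
      (-1) * α * ((-(α * r) + S) / (2 * α)) ^ 2 / 2 = 0 := by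
  field_simp
  linear_combination (-2) * hS

lemma aux_omega (α ω r S : ℝ) (hα : α ≠ 0) :
    ω + (-1) * α * ((2 * ω - α * r + S) / (2 * α)) -
      (-1) * α * ((-(α * r) + S) / (2 * α)) = 0 := by
  field_simp
  ring

noncomputable def H1 (α v θ ω : ℝ) : ℝ := 2 * α * θ + ω * |ω|

noncomputable def H2 (α β v θ ω : ℝ) : ℝ := ω * |ω| / (2 * α) + θ + ω * |v| / β

/-- The C2a final state `(v_f, θ_f, ω_f)`. -/
noncomputable def c2aFinal (α β v θ ω t₁ t₂ t₃ s₁ s₂ : ℝ) : ℝ × ℝ × ℝ :=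
  (v + s₂ * β * t₂,
   θ + ω * t₁ + s₁ * α * t₁ ^ 2 / 2 + (ω + s₁ * α * t₁) * (t₂ + t₃) - s₁ * α * t₃ ^ 2 / 2,
   ω + s₁ * α * t₁ - s₁ * α * t₃)

theorem stmt2 (α β v θ ω : ℝ) (hα : 0 < α) (hβ : 0 < β)
    (hH1 : H1 α v θ ω > 0) (hH2 : H2 α β v θ ω > 0)
    (D' : ℝ) (hD' : D' = 2 * ω ^ 2 + α ^ 2 * v ^ 2 / β ^ 2 + 4 * α * θ)
    (s₁ s₂ : ℝ) (hs₁ : s₁ = -1) (hs₂ : s₂ = -1 ∨ s₂ = 1) (hs₂v : s₂ * v = -|v|)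
    (t₁ t₂ t₃ : ℝ)
    (ht₁ : t₁ = (2 * ω - α * |v| / β + Real.sqrt D') / (2 * α))
    (ht₂ : t₂ = |v| / β)
    (ht₃ : t₃ = (-(α * |v| / β) + Real.sqrt D') / (2 * α)) :
    D' > α ^ 2 * v ^ 2 / β ^ 2 ∧ 0 < t₁ ∧ 0 < t₃ ∧
    c2aFinal α β v θ ω t₁ t₂ t₃ s₁ s₂ = (0, 0, 0) := by
  unfold H1 at hH1
  unfold H2 at hH2
  have hv2 : |v| ^ 2 = v ^ 2 := sq_abs v
  have hvnn : 0 ≤ |v| := abs_nonneg v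
  have hωabs : ω * |ω| ≤ ω ^ 2 := by
    nlinarith [le_abs_self ω, abs_nonneg ω, sq_abs ω]
  set r : ℝ := |v| / β with hr
  have hrnn : 0 ≤ r := by positivity
  have hq : α ^ 2 * v ^ 2 / β ^ 2 = (α * r) ^ 2 := by
    rw [hr]; field_simp; nlinarith [hv2]
  have hqr : α * |v| / β = α * r := by rw [hr]; ring
  rw [hqr] at ht₁ ht₃
  have hωr : ω * |v| / β = ω * r := by rw [hr]; ring
  rw [hωr] at hH2
  have hD'q : D' = 2 * ω ^ 2 + (α * r) ^ 2 + 4 * α * θ := by rw [hD', hq]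
  have hqnn : 0 ≤ α * r := by positivity
  have hgt : D' > α ^ 2 * v ^ 2 / β ^ 2 := by
    rw [hD']; nlinarith
  have hD'0 : 0 ≤ D' := le_trans (by positivity) hgt.le
  set S : ℝ := Real.sqrt D' with hSdef
  have hS : S ^ 2 = D' := Real.sq_sqrt hD'0
  have hSnn : 0 ≤ S := Real.sqrt_nonneg _
  have hSq : α * r < S := by
    nlinarith [hgt, hq, hS, hSnn, hqnn]
  have h2α : (0:ℝ) < 2 * α := by linarith
  have ht₃pos : 0 < t₃ := by
    rw [ht₃]
    have hnum : 0 < -(α * r) + S := by linarith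
    exact div_pos hnum h2α
  have ht₁pos : 0 < t₁ := by
    rw [ht₁]
    have hnum : 0 < 2 * ω - α * r + S := by
      rcases le_or_gt (α * r - 2 * ω) 0 with h | h
      · linarith
      · have key := aux_key α ω θ r hα hrnn h hH1 hH2
        rw [← hD'q] at key
        nlinarith [hS, hSnn, key]
    exact div_pos hnum h2α
  refine ⟨hgt, ht₁pos, ht₃pos, ?_⟩
  have hvs : v + s₂ * |v| = 0 := by
    rcases hs₂ with h | h <;> subst h <;> nlinarith [hs₂v]
  have hβv : β * r = |v| := by rw [hr]; field_simp
  have hαne : α ≠ 0 := ne_of_gt hα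
  have hS' : S ^ 2 = 2 * ω ^ 2 + (α * r) ^ 2 + 4 * α * θ := by rw [hS, hD'q]
  unfold c2aFinal
  refine Prod.ext ?_ (Prod.ext ?_ ?_)
  · show v + s₂ * β * t₂ = 0
    rw [ht₂]
    calc v + s₂ * β * r = v + s₂ * (β * r) := by ring
    _ = v + s₂ * |v| := by rw [hβv]
    _ = 0 := hvs
  · show θ + ω * t₁ + s₁ * α * t₁ ^ 2 / 2 + (ω + s₁ * α * t₁) * (t₂ + t₃) - s₁ * α * t₃ ^ 2 / 2 = 0
    rw [ht₁, ht₂, ht₃, hs₁]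
    exact aux_theta α θ ω r S hαne hS'
  · show ω + s₁ * α * t₁ - s₁ * α * t₃ = 0
    rw [ht₁, ht₃, hs₁]
    exact aux_omega α ω r S hαne
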